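/- Under the stated polytope hypotheses, and assuming additionally that 0 is the only point of ℤ^n in the interior of P, one has P ∩ ℤ^n = ⋃_{i=1}^r (conv(I_i ∪ {0}) ∩ ℤ^n). In other words, every lattice point of P belongs to ∇_i := conv(I_i ∪ {0}) for some i ∈ {1,…,r}, and conversely each ∇_i is contained in P. -/

import Mathlib

open Module Set Finset

/-- A point of `ℝ^n` with integer coordinates. -/
def IsLatticePoint {n : ℕ} (x : Fin n → ℝ) : Prop := ∀ k, ∃ z : ℤ, x k = (z : ℝ)

private lemma aux_ker_finrank {n : ℕ} (f : (Fin n → ℝ) →ₗ[ℝ] ℝ) (hf : f ≠ 0) :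
    finrank ℝ (LinearMap.ker f) = n - 1 := by
  have h1 := LinearMap.finrank_range_add_finrank_ker f
  have hrng : finrank ℝ (LinearMap.range f) = 1 := by
    have hne : LinearMap.range f ≠ ⊥ := by
      simpa [LinearMap.range_eq_bot] using hf
    have h0 : finrank ℝ (LinearMap.range f) ≠ 0 := by
      rwa [ne_eq, Submodule.finrank_eq_zero]
    have hle : finrank ℝ (LinearMap.range f) ≤ 1 := by
      simpa using (LinearMap.range f).finrank_le
    omega
  rw [Module.finrank_fin_fun] at h1
  omega

private lemma vectorSpan_le_ker {n : ℕ} (f : (Fin n → ℝ) →ₗ[ℝ] ℝ) (P : Set (Fin n → ℝ)) :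
    vectorSpan ℝ {y ∈ P | f y = 1} ≤ LinearMap.ker f := by
  rw [vectorSpan_def, Submodule.span_le]
  rintro v ⟨a, ha, b, hb, rfl⟩
  simp only [SetLike.mem_coe, LinearMap.mem_ker, vsub_eq_sub, map_sub, ha.2, hb.2, sub_self]

private lemma climb_step {n : ℕ} (A : Finset (Fin n → ℝ))
    {P : Set (Fin n → ℝ)} (hPdef : P = convexHull ℝ (A : Set (Fin n → ℝ)))
    (h0 : (0 : Fin n → ℝ) ∈ interior P)
    {x : Fin n → ℝ} (hxP : x ∈ P)
    (f : (Fin n → ℝ) →ₗ[ℝ] ℝ) (hle : ∀ y ∈ P, f y ≤ 1) (hfx : f x = 1)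
    (hd : finrank ℝ (vectorSpan ℝ {y ∈ P | f y = 1}) + 1 < n) :
    ∃ f' : (Fin n → ℝ) →ₗ[ℝ] ℝ, (∀ y ∈ P, f' y ≤ 1) ∧ f' x = 1 ∧
      finrank ℝ (vectorSpan ℝ {y ∈ P | f y = 1})
        < finrank ℝ (vectorSpan ℝ {y ∈ P | f' y = 1}) := by
  classical
  set F : Set (Fin n → ℝ) := {y ∈ P | f y = 1} with hF
  have hxF : x ∈ F := ⟨hxP, hfx⟩
  set U : Submodule ℝ (Fin n → ℝ) := Submodule.span ℝ F with hU
  -- U has small finrank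
  have hUle : U ≤ Submodule.span ℝ {x} ⊔ vectorSpan ℝ F := by
    rw [hU, Submodule.span_le]
    intro y hy
    have : y = (y - x) + x := by ring_nf
    rw [this]
    exact Submodule.add_mem _
      (Submodule.mem_sup_right (vsub_mem_vectorSpan ℝ hy hxF))
      (Submodule.mem_sup_left (Submodule.mem_span_singleton_self x))
  have hUfin : finrank ℝ U < n := by
    have h1 := Submodule.finrank_sup_add_finrank_inf_eq (Submodule.span ℝ {x}) (vectorSpan ℝ F)
    have h2 : finrank ℝ (Submodule.span ℝ ({x} : Set (Fin n → ℝ))) ≤ 1 := by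
      rcases eq_or_ne x 0 with h | h
      · subst h; rw [Submodule.span_zero_singleton]; simp
      · rw [show Submodule.span ℝ ({x} : Set (Fin n → ℝ)) = ℝ ∙ x from rfl,
          finrank_span_singleton h]
    have h3 := Submodule.finrank_mono hUle
    omega
  have hUtop : U < ⊤ := by
    rcases lt_or_eq_of_le (le_top : U ≤ ⊤) with h | h
    · exact h
    · exfalso
      rw [h] at hUfin
      rw [finrank_top, Module.finrank_fin_fun] at hUfin
      omega
  obtain ⟨φ, hφ0, hφbot⟩ := Submodule.exists_dual_map_eq_bot_of_lt_top hUtop inferInstance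
  have hφU : ∀ u ∈ U, φ u = 0 := by
    intro u hu
    have : φ u ∈ U.map φ := Submodule.mem_map_of_mem hu
    rwa [hφbot, Submodule.mem_bot] at this
  -- span of A is everything
  have hspanA : Submodule.span ℝ (A : Set (Fin n → ℝ)) = ⊤ := by
    apply Submodule.eq_top_of_nonempty_interior'
    refine ⟨0, interior_mono ?_ h0⟩
    rw [hPdef]
    exact convexHull_min Submodule.subset_span (Submodule.span ℝ (A : Set (Fin n → ℝ))).convex
  -- some vertex has φ a ≠ 0
  have hex : ∃ a ∈ A, φ a ≠ 0 := by
    by_contra h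
    push_neg at h
    apply hφ0
    have : Submodule.span ℝ (A : Set (Fin n → ℝ)) ≤ LinearMap.ker φ := by
      rw [Submodule.span_le]; intro a ha; exact h a ha
    exact LinearMap.ker_eq_top.mp (top_le_iff.mp (hspanA ▸ this))
  -- wlog positive
  have hex' : ∃ ψ : (Fin n → ℝ) →ₗ[ℝ] ℝ, (∀ u ∈ U, ψ u = 0) ∧ ∃ a ∈ A, 0 < ψ a := by
    obtain ⟨a, haA, ha⟩ := hex
    rcases lt_or_gt_of_ne ha with h | h
    · exact ⟨-φ, fun u hu => by simp [hφU u hu], a, haA, by simpa using h⟩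
    · exact ⟨φ, hφU, a, haA, h⟩
  obtain ⟨ψ, hψU, a₁, ha₁A, ha₁⟩ := hex'
  set S : Finset (Fin n → ℝ) := A.filter (fun a => 0 < ψ a) with hS
  have hSne : S.Nonempty := ⟨a₁, by simp [hS, ha₁A, ha₁]⟩
  have hAP : ∀ a ∈ A, a ∈ P := fun a ha => hPdef ▸ subset_convexHull ℝ _ ha
  have hSlt : ∀ a ∈ S, f a < 1 := by
    intro a ha
    rw [hS, Finset.mem_filter] at ha
    rcases lt_or_eq_of_le (hle a (hAP a ha.1)) with h | h
    · exact h
    · exfalso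
      have : a ∈ F := ⟨hAP a ha.1, h⟩
      have := hψU a (Submodule.subset_span this)
      linarith [ha.2]
  set t : ℝ := S.inf' hSne (fun a => (1 - f a) / ψ a) with ht
  have htpos : 0 < t := by
    rw [ht, Finset.lt_inf'_iff]
    intro a ha
    rw [hS, Finset.mem_filter] at ha
    exact div_pos (by linarith [hSlt a (by rwa [hS, Finset.mem_filter])]) ha.2
  obtain ⟨a₀, ha₀S, ha₀⟩ := Finset.exists_mem_eq_inf' hSne (fun a => (1 - f a) / ψ a)
  have ha₀ψ : 0 < ψ a₀ := (Finset.mem_filter.mp ha₀S).2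
  set f' : (Fin n → ℝ) →ₗ[ℝ] ℝ := f + t • ψ with hf'
  have hf'U : ∀ u ∈ F, f' u = f u := by
    intro u hu
    simp [hf', hψU u (Submodule.subset_span hu)]
  have hle' : ∀ y ∈ P, f' y ≤ 1 := by
    intro y hy
    rw [hPdef] at hy
    have hconv : Convex ℝ {w : Fin n → ℝ | f' w ≤ 1} := convex_halfSpace_le f'.isLinear 1
    refine convexHull_min ?_ hconv hy
    intro a ha
    simp only [Set.mem_setOf_eq, hf', LinearMap.add_apply, LinearMap.smul_apply, smul_eq_mul]
    rcases le_or_gt (ψ a) 0 with h | h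
    · have := hle a (hAP a ha)
      nlinarith
    · have haS : a ∈ S := Finset.mem_filter.mpr ⟨ha, h⟩
      have : t ≤ (1 - f a) / ψ a := ht ▸ Finset.inf'_le _ haS
      have := (le_div_iff₀ h).mp this
      linarith
  have hfx' : f' x = 1 := by rw [hf'U x hxF, hfx]
  refine ⟨f', hle', hfx', ?_⟩
  -- F ⊆ F'
  have hFF' : F ⊆ {y ∈ P | f' y = 1} := fun y hy => ⟨hy.1, by rw [hf'U y hy, hy.2]⟩
  have ha₀F' : a₀ ∈ {y ∈ P | f' y = 1} := by
    refine ⟨hAP a₀ (Finset.mem_filter.mp ha₀S).1, ?_⟩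
    simp only [hf', LinearMap.add_apply, LinearMap.smul_apply, smul_eq_mul]
    rw [ht, ha₀]
    field_simp
    ring
  have hstrict : vectorSpan ℝ F < vectorSpan ℝ {y ∈ P | f' y = 1} := by
    refine lt_of_le_of_ne (vectorSpan_mono ℝ hFF') ?_
    intro heq
    have hmem : a₀ - x ∈ vectorSpan ℝ {y ∈ P | f' y = 1} := by
      simpa using vsub_mem_vectorSpan ℝ ha₀F' (hFF' hxF)
    rw [← heq] at hmem
    have hker : vectorSpan ℝ F ≤ U := by
      rw [vectorSpan_def, Submodule.span_le]
      rintro v ⟨a, ha, b, hb, rfl⟩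
      exact Submodule.sub_mem _ (Submodule.subset_span ha) (Submodule.subset_span hb)
    have := hψU _ (hker hmem)
    rw [map_sub, hψU x (Submodule.subset_span hxF)] at this
    linarith
  exact Submodule.finrank_lt_finrank_of_lt hstrict

private lemma climb {n : ℕ} (A : Finset (Fin n → ℝ))
    {P : Set (Fin n → ℝ)} (hPdef : P = convexHull ℝ (A : Set (Fin n → ℝ)))
    (h0 : (0 : Fin n → ℝ) ∈ interior P)
    {x : Fin n → ℝ} (hxP : x ∈ P) (k : ℕ) :
    ∀ f : (Fin n → ℝ) →ₗ[ℝ] ℝ, (∀ y ∈ P, f y ≤ 1) → f x = 1 →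
      n - 1 ≤ k + finrank ℝ (vectorSpan ℝ {y ∈ P | f y = 1}) →
      ∃ f' : (Fin n → ℝ) →ₗ[ℝ] ℝ, (∀ y ∈ P, f' y ≤ 1) ∧ f' x = 1 ∧
        finrank ℝ (vectorSpan ℝ {y ∈ P | f' y = 1}) = n - 1 := by
  induction k with
  | zero =>
    intro f hle hfx hk
    refine ⟨f, hle, hfx, ?_⟩
    have hf0 : f ≠ 0 := by
      intro h
      rw [h] at hfx
      simpa using hfx
    have hub : finrank ℝ (vectorSpan ℝ {y ∈ P | f y = 1}) ≤ n - 1 := by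
      have := Submodule.finrank_mono (vectorSpan_le_ker f P)
      rwa [aux_ker_finrank f hf0] at this
    omega
  | succ k ih =>
    intro f hle hfx hk
    by_cases hd : finrank ℝ (vectorSpan ℝ {y ∈ P | f y = 1}) + 1 < n
    · obtain ⟨f', hle', hfx', hlt⟩ := climb_step A hPdef h0 hxP f hle hfx hd
      exact ih f' hle' hfx' (by omega)
    · -- already at dimension ≥ n - 1
      refine ⟨f, hle, hfx, ?_⟩
      have hf0 : f ≠ 0 := by
        intro h
        rw [h] at hfx
        simpa using hfx
      have hub : finrank ℝ (vectorSpan ℝ {y ∈ P | f y = 1}) ≤ n - 1 := by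
        have := Submodule.finrank_mono (vectorSpan_le_ker f P)
        rwa [aux_ker_finrank f hf0] at this
      -- if n = 0 then f = 0, contradiction with f x = 1
      have hn : 1 ≤ n := by
        by_contra h
        push_neg at h
        interval_cases n
        have hx0 : x = 0 := Subsingleton.elim x 0
        rw [hx0, map_zero] at hfx
        norm_num at hfx
      omega

private lemma exists_facet {n : ℕ} (A : Finset (Fin n → ℝ))
    {P : Set (Fin n → ℝ)} (hPdef : P = convexHull ℝ (A : Set (Fin n → ℝ)))
    (h0 : (0 : Fin n → ℝ) ∈ interior P)
    {x : Fin n → ℝ} (hxP : x ∈ P) (hxi : x ∉ interior P) :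
    ∃ F : Set (Fin n → ℝ), IsExposed ℝ P F ∧ x ∈ F ∧
      Module.finrank ℝ (vectorSpan ℝ F) = n - 1 ∧ IsClosed F := by
  have hPconv : Convex ℝ P := hPdef ▸ convex_convexHull ℝ _
  -- supporting functional at x
  obtain ⟨g, hg⟩ := geometric_hahn_banach_open_point (hPconv.interior) isOpen_interior hxi
  have hgx : 0 < g x := by
    have := hg 0 h0
    simpa using this
  have hgle : ∀ y ∈ P, g y ≤ g x := by
    intro y hy
    by_contra h
    push_neg at h
    have hgy : 0 < g y := lt_trans hgx h
    set a : ℝ := 1 - g x / g y with ha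
    have ha0 : 0 < a := by
      rw [ha]
      have : g x / g y < 1 := (div_lt_one hgy).mpr h
      linarith
    have hb0 : (0:ℝ) ≤ 1 - a := by
      rw [ha]
      have : 0 < g x / g y := div_pos hgx hgy
      linarith
    have hz : a • (0 : Fin n → ℝ) + (1 - a) • y ∈ interior P :=
      hPconv.combo_interior_self_mem_interior h0 hy ha0 hb0 (by ring)
    have := hg _ hz
    rw [smul_zero, zero_add, map_smul] at this
    simp only [smul_eq_mul] at this
    rw [ha] at this
    have hgxy : (1 - (1 - g x / g y)) * g y = g x := by
      field_simp
      ring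
    rw [hgxy] at this
    exact lt_irrefl _ this
  -- normalize
  set f : (Fin n → ℝ) →ₗ[ℝ] ℝ := (g x)⁻¹ • (g : (Fin n → ℝ) →ₗ[ℝ] ℝ) with hf
  have hfx : f x = 1 := by
    simp [hf, inv_mul_cancel₀ (ne_of_gt hgx)]
  have hle : ∀ y ∈ P, f y ≤ 1 := by
    intro y hy
    simp only [hf, LinearMap.smul_apply, ContinuousLinearMap.coe_coe, smul_eq_mul]
    rw [← inv_mul_cancel₀ (ne_of_gt hgx)]
    exact mul_le_mul_of_nonneg_left (hgle y hy) (inv_nonneg.mpr (le_of_lt hgx))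
  obtain ⟨f', hle', hfx', hrank⟩ := climb A hPdef h0 hxP (n-1) f hle hfx (by omega)
  refine ⟨{y ∈ P | f' y = 1}, ?_, ⟨hxP, hfx'⟩, hrank, ?_⟩
  · intro _
    refine ⟨LinearMap.toContinuousLinearMap f', ?_⟩
    ext y
    simp only [Set.mem_setOf_eq, LinearMap.coe_toContinuousLinearMap']
    constructor
    · rintro ⟨hyP, hy1⟩
      exact ⟨hyP, fun z hz => by rw [hy1]; exact hle' z hz⟩
    · rintro ⟨hyP, hy⟩
      exact ⟨hyP, le_antisymm (hle' y hyP) (hfx' ▸ hy x hxP)⟩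
  · have hPc : IsClosed P := by
      rw [hPdef]
      exact A.finite_toSet.isClosed_convexHull (𝕜 := ℝ)
    have : Continuous f' := f'.continuous_of_finiteDimensional
    exact hPc.inter (isClosed_eq this continuous_const)

/-- for a reflexive polytope `P` with nef-partition `I_1 ⊔ ⋯ ⊔ I_r` of its
vertex set, whose only interior lattice point is `0`, every lattice point of `P` lies in
some `∇_i = conv(I_i ∪ {0})`, and conversely each `∇_i` is contained in `P`. -/
theorem stmt2 (n r : ℕ) (hn : 1 ≤ n) (hr : 1 ≤ r)
    (A : Finset (Fin n → ℝ))
    (P : Set (Fin n → ℝ)) (hPdef : P = convexHull ℝ (A : Set (Fin n → ℝ)))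
    (h0 : (0 : Fin n → ℝ) ∈ interior P)
    (hvertLat : ∀ v ∈ Set.extremePoints ℝ P, IsLatticePoint v)
    (I : Fin r → Set (Fin n → ℝ))
    (hIdisj : ∀ i j : Fin r, i ≠ j → Disjoint (I i) (I j))
    (hIunion : (⋃ i, I i) = Set.extremePoints ℝ P)
    -- (i) reflexivity: every facet lies on an integral hyperplane at level -1
    (hreflexive : ∀ F : Set (Fin n → ℝ), IsExposed ℝ P F →
      Module.finrank ℝ (vectorSpan ℝ F) = n - 1 →
      ∃ m : Fin n → ℤ, ∀ x ∈ F, ∑ k, (m k : ℝ) * x k = -1)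
    -- (ii) Cartier data of the nef-partition on every facet
    (hcartier : ∀ F : Set (Fin n → ℝ), IsExposed ℝ P F →
      Module.finrank ℝ (vectorSpan ℝ F) = n - 1 → ∀ i : Fin r,
      ∃ m : Fin n → ℤ, ∀ v ∈ Set.extremePoints ℝ F,
        (v ∈ I i → ∑ k, (m k : ℝ) * v k = -1) ∧ (v ∉ I i → ∑ k, (m k : ℝ) * v k = 0))
    -- `0` is the only lattice point interior to `P`
    (honlyint : ∀ x ∈ interior P, IsLatticePoint x → x = 0) :
    ({x ∈ P | IsLatticePoint x}
        = ⋃ i : Fin r, {x ∈ convexHull ℝ (I i ∪ {0}) | IsLatticePoint x})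
      ∧ ∀ i : Fin r, convexHull ℝ (I i ∪ {0}) ⊆ P := by
  classical
  have hPconv : Convex ℝ P := hPdef ▸ convex_convexHull ℝ _
  have hextP : Set.extremePoints ℝ P ⊆ A := by
    rw [hPdef]; exact extremePoints_convexHull_subset
  have part2 : ∀ i : Fin r, convexHull ℝ (I i ∪ {0}) ⊆ P := by
    intro i
    apply convexHull_min _ hPconv
    rintro v (hv | hv)
    · exact extremePoints_subset (hIunion ▸ Set.mem_iUnion.mpr ⟨i, hv⟩ :
        v ∈ Set.extremePoints ℝ P)
    · rw [Set.mem_singleton_iff.mp hv]; exact interior_subset h0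
  refine ⟨?_, part2⟩
  ext x
  simp only [Set.mem_setOf_eq, Set.mem_iUnion]
  constructor
  swap
  · rintro ⟨i, hx, hxL⟩
    exact ⟨part2 i hx, hxL⟩
  rintro ⟨hxP, hxL⟩
  by_cases hxi : x ∈ interior P
  · refine ⟨⟨0, hr⟩, ?_, hxL⟩
    rw [honlyint x hxi hxL]
    exact subset_convexHull ℝ _ (Or.inr rfl)
  obtain ⟨F, hexp, hxF, hrank, hFcl⟩ := exists_facet A hPdef h0 hxP hxi
  have hFsub : F ⊆ P := hexp.subset
  have hFconv : Convex ℝ F := hexp.convex hPconv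
  have hPcomp : IsCompact P := hPdef ▸ A.finite_toSet.isCompact_convexHull (𝕜 := ℝ)
  have hFcomp : IsCompact F := hPcomp.of_isClosed_subset hFcl hFsub
  have hextF : Set.extremePoints ℝ F ⊆ Set.extremePoints ℝ P :=
    hexp.isExtreme.extremePoints_subset_extremePoints
  have hfin : (Set.extremePoints ℝ F).Finite :=
    A.finite_toSet.subset (fun v hv => hextP (hextF hv))
  have hFeq : F = convexHull ℝ (Set.extremePoints ℝ F) :=
    (closure_convexHull_extremePoints hFcomp hFconv).symm.trans
      (hfin.isClosed_convexHull (𝕜 := ℝ)).closure_eq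
  have hxconv : x ∈ convexHull ℝ (Set.extremePoints ℝ F) := hFeq ▸ hxF
  rw [hfin.convexHull_eq] at hxconv
  obtain ⟨w, hw0, hw1, hwx⟩ := hxconv
  set T := hfin.toFinset with hT
  choose m hm using hcartier F hexp hrank
  set c : Fin r → ℝ := fun i => ∑ v ∈ T, w v * (∑ k, (m i k : ℝ) * v k) with hc
  have hval : ∀ v ∈ T, ∀ i : Fin r,
      (∑ k, (m i k : ℝ) * v k) = if v ∈ I i then -1 else 0 := by
    intro v hv i
    rw [hT, Set.Finite.mem_toFinset] at hv
    by_cases hvi : v ∈ I i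
    · rw [if_pos hvi]; exact (hm i v hv).1 hvi
    · rw [if_neg hvi]; exact (hm i v hv).2 hvi
  have hxk : ∀ kk, x kk = ∑ v ∈ T, w v * v kk := by
    intro kk
    rw [← hwx, Finset.centerMass_eq_of_sum_1 _ _ hw1]
    simp [Finset.sum_apply]
  have hcx : ∀ i, (∑ k, (m i k : ℝ) * x k) = c i := by
    intro i
    simp_rw [hxk, Finset.mul_sum]
    rw [Finset.sum_comm]
    refine Finset.sum_congr rfl fun v _ => ?_
    rw [Finset.mul_sum]
    refine Finset.sum_congr rfl fun k _ => ?_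
    ring
  have hcint : ∀ i, ∃ z : ℤ, c i = (z : ℝ) := by
    intro i
    choose zz hzz using hxL
    refine ⟨∑ k, m i k * zz k, ?_⟩
    rw [← hcx i]
    push_cast
    exact Finset.sum_congr rfl fun k _ => by rw [hzz k]
  have hcs : ∀ i, c i = -∑ v ∈ T.filter (fun v => v ∈ I i), w v := by
    intro i
    rw [hc]
    simp only []
    rw [Finset.sum_congr rfl (fun v hv => by rw [hval v hv i])]
    rw [Finset.sum_filter, ← Finset.sum_neg_distrib]
    refine Finset.sum_congr rfl fun v _ => ?_
    by_cases hvi : v ∈ I i <;> simp [hvi]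
  have hwT : ∀ v ∈ T, 0 ≤ w v := fun v hv => hw0 v (by rwa [hT, Set.Finite.mem_toFinset] at hv)
  have hcle : ∀ i, c i ≤ 0 := by
    intro i
    rw [hcs i]
    simp only [neg_nonpos]
    exact Finset.sum_nonneg fun v hv => hwT v (Finset.filter_subset _ _ hv)
  have hcge : ∀ i, -1 ≤ c i := by
    intro i
    rw [hcs i, neg_le_neg_iff]
    calc ∑ v ∈ T.filter (fun v => v ∈ I i), w v ≤ ∑ v ∈ T, w v :=
          Finset.sum_le_sum_of_subset_of_nonneg (Finset.filter_subset _ _)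
            (fun v hv _ => hwT v hv)
      _ = 1 := hw1
  have hsum : ∑ i : Fin r, c i = -1 := by
    have hone : ∀ v ∈ T, ∑ i : Fin r, (if v ∈ I i then (-1:ℝ) else 0) = -1 := by
      intro v hv
      rw [hT, Set.Finite.mem_toFinset] at hv
      have hvU : v ∈ ⋃ i, I i := hIunion ▸ hextF hv
      obtain ⟨i₀, hi₀⟩ := Set.mem_iUnion.mp hvU
      rw [Finset.sum_eq_single i₀]
      · rw [if_pos hi₀]
      · intro j _ hj
        rw [if_neg (fun hvj => Set.disjoint_left.mp (hIdisj j i₀ hj) hvj hi₀)]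
      · intro h; exact absurd (Finset.mem_univ i₀) h
    calc ∑ i : Fin r, c i
        = ∑ i : Fin r, ∑ v ∈ T, w v * (if v ∈ I i then -1 else 0) := by
          refine Finset.sum_congr rfl fun i _ => ?_
          exact Finset.sum_congr rfl fun v hv => by rw [hval v hv i]
      _ = ∑ v ∈ T, ∑ i : Fin r, w v * (if v ∈ I i then -1 else 0) := Finset.sum_comm
      _ = ∑ v ∈ T, w v * (-1) := by
          refine Finset.sum_congr rfl fun v hv => ?_
          rw [← Finset.mul_sum, hone v hv]
      _ = -1 := by rw [← Finset.sum_mul, hw1, one_mul]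
  have hex0 : ∃ i₀ : Fin r, c i₀ = -1 := by
    by_contra h
    push_neg at h
    have hall : ∀ i : Fin r, c i = 0 := by
      intro i
      obtain ⟨z, hz⟩ := hcint i
      have h1 : (-1:ℝ) ≤ z := hz ▸ hcge i
      have h2 : (z:ℝ) ≤ 0 := hz ▸ hcle i
      have h3 : (z:ℝ) ≠ -1 := hz ▸ h i
      have hz1 : (-1:ℤ) ≤ z := by exact_mod_cast h1
      have hz2 : z ≤ 0 := by exact_mod_cast h2
      have : z = 0 := by
        rcases (by omega : z = -1 ∨ z = 0) with h' | h'
        · exfalso; apply h3; rw [h']; norm_num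
        · exact h'
      rw [hz, this, Int.cast_zero]
    rw [Finset.sum_congr rfl (fun i _ => hall i)] at hsum
    simp at hsum
  obtain ⟨i₀, hi₀⟩ := hex0
  have hrest : ∀ j : Fin r, j ≠ i₀ → c j = 0 := by
    have herase : ∑ j ∈ Finset.univ.erase i₀, c j = 0 := by
      have := Finset.add_sum_erase Finset.univ c (Finset.mem_univ i₀)
      rw [hsum, hi₀] at this
      linarith
    intro j hj
    exact (Finset.sum_eq_zero_iff_of_nonpos
      (fun i _ => hcle i)).mp herase j (Finset.mem_erase.mpr ⟨hj, Finset.mem_univ j⟩)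
  have hsupp : ∀ v ∈ T, w v ≠ 0 → v ∈ I i₀ := by
    intro v hv hwv
    have hvU : v ∈ ⋃ i, I i := by
      rw [hT, Set.Finite.mem_toFinset] at hv
      exact hIunion ▸ hextF hv
    obtain ⟨j, hj⟩ := Set.mem_iUnion.mp hvU
    by_cases hji : j = i₀
    · rwa [hji] at hj
    · exfalso
      have hcj := hrest j hji
      rw [hcs j] at hcj
      have hzero : ∑ v ∈ T.filter (fun v => v ∈ I j), w v = 0 := by linarith
      have := (Finset.sum_eq_zero_iff_of_nonneg
        (fun u hu => hwT u (Finset.filter_subset _ _ hu))).mp hzero v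
        (Finset.mem_filter.mpr ⟨hv, hj⟩)
      exact hwv this
  refine ⟨i₀, ?_, hxL⟩
  have hxcm : (T.filter (fun v => w v ≠ 0)).centerMass w id = x := by
    rw [Finset.centerMass_filter_ne_zero, hwx]
  rw [← hxcm]
  apply Finset.centerMass_mem_convexHull
  · intro v hv
    exact hwT v (Finset.filter_subset _ _ hv)
  · rw [Finset.sum_filter_ne_zero, hw1]
    norm_num
  · intro v hv
    rw [Finset.mem_filter] at hv
    exact Or.inl (hsupp v hv.1 hv.2)
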